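/- If q = 1, then the dual L* of the extended Lorentz cone L = {(x,u) ∈ ℝ^p × ℝ : x ≥ |u|e} satisfies L* = cone{(e^i,1), (e^i,−1) : i = 1,…,p}, and no set of fewer than 2p vectors generates L* (so L* is a (p+1)-dimensional polyhedral cone with minimal number of generators 2p). -/

import Mathlib

open scoped RealInnerProductSpace

/-- The extended Lorentz cone with `q = 1`:
`L = {(x,u) ∈ ℝ^p × ℝ : x ≥ |u|e}`. -/
def extendedLorentzCone1 (p : ℕ) : Set (EuclideanSpace ℝ (Fin p) × ℝ) :=
  {z | ∀ i, |z.2| ≤ z.1 i}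

/-- The dual of a set `S ⊆ ℝ^p × ℝ`. -/
def dualSet1 (p : ℕ) (S : Set (EuclideanSpace ℝ (Fin p) × ℝ)) :
    Set (EuclideanSpace ℝ (Fin p) × ℝ) :=
  {z | ∀ w ∈ S, (0:ℝ) ≤ ⟪z.1, w.1⟫ + z.2 * w.2}

/-- The cone generated by finitely many vectors `v¹,…,v^k`. -/
def coneGen {V : Type*} [AddCommMonoid V] [Module ℝ V] {k : ℕ}
    (v : Fin k → V) : Set V :=
  {z | ∃ lam : Fin k → ℝ, (∀ i, 0 ≤ lam i) ∧ z = ∑ i, lam i • v i}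

namespace Stmt5Aux

theorem mysum_apply {p k : ℕ} (f : Fin k → EuclideanSpace ℝ (Fin p)) (j : Fin p) :
    (∑ i, f i) j = ∑ i, f i j := by
  induction (Finset.univ : Finset (Fin k)) using Finset.induction with
  | empty => rfl
  | insert a s h ih => simp [Finset.sum_insert h, PiLp.add_apply, ih]

theorem myfst_sum {p : ℕ} {ι : Type*} (s : Finset ι) (f : ι → EuclideanSpace ℝ (Fin p) × ℝ) :
    (∑ i ∈ s, f i).1 = ∑ i ∈ s, (f i).1 :=
  map_sum (AddMonoidHom.fst _ _) f s

theorem mysnd_sum {p : ℕ} {ι : Type*} (s : Finset ι) (f : ι → EuclideanSpace ℝ (Fin p) × ℝ) :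
    (∑ i ∈ s, f i).2 = ∑ i ∈ s, (f i).2 :=
  map_sum (AddMonoidHom.snd _ _) f s

theorem dual_char (p : ℕ) (z : EuclideanSpace ℝ (Fin p) × ℝ) :
    z ∈ dualSet1 p (extendedLorentzCone1 p) ↔
      (∀ i, 0 ≤ z.1 i) ∧ |z.2| ≤ ∑ i, z.1 i := by
  constructor
  · intro h
    have hnn : ∀ i, 0 ≤ z.1 i := by
      intro i
      have := h (EuclideanSpace.single i 1, 0) (by
        intro j
        simp [EuclideanSpace.single_apply]
        split <;> norm_num)
      simpa [EuclideanSpace.inner_single_right] using this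
    refine ⟨hnn, abs_le.2 ⟨?_, ?_⟩⟩
    · have := h ((WithLp.toLp 2 (fun _ => (1:ℝ)) : EuclideanSpace ℝ (Fin p)), 1) (by intro j; norm_num)
      simp only [PiLp.inner_apply, RCLike.inner_apply, conj_trivial, mul_one, one_mul] at this
      linarith
    · have := h ((WithLp.toLp 2 (fun _ => (1:ℝ)) : EuclideanSpace ℝ (Fin p)), -1) (by intro j; norm_num)
      simp only [PiLp.inner_apply, RCLike.inner_apply, conj_trivial, mul_one, one_mul] at this
      linarith
  · rintro ⟨hnn, habs⟩ ⟨x, u⟩ hw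
    simp only [extendedLorentzCone1, Set.mem_setOf_eq] at hw
    have hin : ⟪z.1, x⟫ = ∑ i, z.1 i * x i := by
      simp [PiLp.inner_apply]
      exact Finset.sum_congr rfl fun i _ => mul_comm _ _
    have h1 : ∑ i, z.1 i * |u| ≤ ∑ i, z.1 i * x i :=
      Finset.sum_le_sum fun i _ => mul_le_mul_of_nonneg_left (hw i) (hnn i)
    have h2 : (∑ i, z.1 i) * |u| = ∑ i, z.1 i * |u| := Finset.sum_mul _ _ _
    have h3 : |z.2| * |u| ≤ (∑ i, z.1 i) * |u| :=
      mul_le_mul_of_nonneg_right habs (abs_nonneg u)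
    have h4 : -(z.2 * u) ≤ |z.2| * |u| := by
      rw [← abs_mul]; exact neg_le_abs _
    simp only [Set.mem_setOf_eq]
    rw [hin]
    linarith

theorem cone_char (p : ℕ) (z : EuclideanSpace ℝ (Fin p) × ℝ) :
    z ∈ coneGen (Fin.append (fun i : Fin p => (EuclideanSpace.single i (1:ℝ), (1:ℝ)))
        (fun i : Fin p => (EuclideanSpace.single i (1:ℝ), (-1:ℝ)))) ↔
      (∀ i, 0 ≤ z.1 i) ∧ |z.2| ≤ ∑ i, z.1 i := by
  constructor
  · rintro ⟨lam, hlam, hz⟩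
    set a : Fin p → ℝ := fun i => lam (Fin.castAdd p i) with ha
    set b : Fin p → ℝ := fun i => lam (Fin.natAdd p i) with hb
    have hz' : z = ∑ i : Fin p, a i • (EuclideanSpace.single i (1:ℝ), (1:ℝ))
        + ∑ i : Fin p, b i • (EuclideanSpace.single i (1:ℝ), (-1:ℝ)) := by
      rw [hz, Fin.sum_univ_add]
      simp only [Fin.append_left, Fin.append_right]
      rfl
    have hfst : ∀ j, z.1 j = a j + b j := by
      intro j
      rw [hz']
      simp only [Prod.fst_add, myfst_sum, Prod.smul_fst, PiLp.add_apply, mysum_apply,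
        PiLp.smul_apply, EuclideanSpace.single_apply, smul_eq_mul]
      simp [Finset.sum_ite_eq]
    have hsnd : z.2 = ∑ i, a i - ∑ i, b i := by
      rw [hz']
      simp only [Prod.snd_add, mysnd_sum, Prod.smul_snd, smul_eq_mul, mul_one, mul_neg]
      simp [sub_eq_add_neg]
    constructor
    · intro j
      rw [hfst j]
      exact add_nonneg (hlam _) (hlam _)
    · have hsum : ∑ j, z.1 j = ∑ i, a i + ∑ i, b i := by
        rw [← Finset.sum_add_distrib]
        exact Finset.sum_congr rfl fun j _ => hfst j
      have h1 : (0:ℝ) ≤ ∑ i, a i := Finset.sum_nonneg fun i _ => hlam _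
      have h2 : (0:ℝ) ≤ ∑ i, b i := Finset.sum_nonneg fun i _ => hlam _
      rw [hsnd, hsum, abs_sub_le_iff]
      constructor <;> linarith
  · rintro ⟨hnn, habs⟩
    set s := ∑ i, z.1 i with hs
    have hs0 : 0 ≤ s := Finset.sum_nonneg fun i _ => hnn i
    rcases eq_or_lt_of_le hs0 with hseq | hspos
    · have hz1 : ∀ i, z.1 i = 0 := by
        intro i
        have := Finset.sum_eq_zero_iff_of_nonneg (fun i _ => hnn i) |>.1 hseq.symm
        exact this i (Finset.mem_univ i)
      have hz2 : z.2 = 0 := by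
        have h : |z.2| ≤ 0 := hseq ▸ habs
        simpa using abs_nonpos_iff.1 h
      refine ⟨0, fun i => le_refl 0, ?_⟩
      simp only [Pi.zero_apply, zero_smul, Finset.sum_const, smul_zero]
      apply Prod.ext
      · ext j
        simp [hz1 j]
      · simp [hz2]
    · have hsne : s ≠ 0 := ne_of_gt hspos
      set a : Fin p → ℝ := fun i => z.1 i * ((s + z.2) / (2 * s)) with ha
      set b : Fin p → ℝ := fun i => z.1 i * ((s - z.2) / (2 * s)) with hb
      have habs' := abs_le.1 habs
      have hap : ∀ i, 0 ≤ a i := fun i =>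
        mul_nonneg (hnn i) (div_nonneg (by linarith [habs'.1]) (by linarith))
      have hbp : ∀ i, 0 ≤ b i := fun i =>
        mul_nonneg (hnn i) (div_nonneg (by linarith [habs'.2]) (by linarith))
      have hA : ∑ i, a i = (s + z.2) / 2 := by
        simp only [ha]
        rw [← Finset.sum_mul, ← hs]
        field_simp
      have hB : ∑ i, b i = (s - z.2) / 2 := by
        simp only [hb]
        rw [← Finset.sum_mul, ← hs]
        field_simp
      refine ⟨Fin.append a b, ?_, ?_⟩
      · intro i
        refine Fin.addCases (fun j => ?_) (fun j => ?_) i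
        · rw [Fin.append_left]; exact hap j
        · rw [Fin.append_right]; exact hbp j
      · rw [Fin.sum_univ_add]
        simp only [Fin.append_left, Fin.append_right]
        apply Prod.ext
        · ext j
          simp only [Prod.fst_add, myfst_sum, Prod.smul_fst, PiLp.add_apply, mysum_apply,
            PiLp.smul_apply, EuclideanSpace.single_apply, smul_eq_mul]
          simp only [mul_ite, mul_one, mul_zero, Finset.sum_ite_eq, Finset.mem_univ, if_true]
          rw [ha, hb]
          field_simp
          ring
        · simp only [Prod.snd_add, mysnd_sum, Prod.smul_snd, smul_eq_mul, mul_one, mul_neg]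
          rw [Finset.sum_neg_distrib, ← sub_eq_add_neg, hA, hB]
          ring

theorem extreme_lemma {p k : ℕ} (w : Fin k → EuclideanSpace ℝ (Fin p) × ℝ)
    (hmem : ∀ j, (∀ l, 0 ≤ (w j).1 l) ∧ |(w j).2| ≤ ∑ l, (w j).1 l)
    (i : Fin p) (ε : ℝ) (hε : ε = 1 ∨ ε = -1)
    (lam : Fin k → ℝ) (hlam : ∀ j, 0 ≤ lam j)
    (hg : ((EuclideanSpace.single i 1, ε) : EuclideanSpace ℝ (Fin p) × ℝ) = ∑ j, lam j • w j) :
    ∃ j, ∃ c : ℝ, 0 < c ∧ w j = c • (EuclideanSpace.single i 1, ε) := by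
  have hε2 : ε * ε = 1 := by rcases hε with h | h <;> rw [h] <;> norm_num
  have hεabs : |ε| = 1 := by rcases hε with h | h <;> rw [h] <;> norm_num
  have hsnd : ε = ∑ j, lam j * (w j).2 := by
    have := congrArg Prod.snd hg
    simpa [mysnd_sum, Prod.smul_snd] using this
  have hfst : ∀ l, (EuclideanSpace.single i (1:ℝ)) l = ∑ j, lam j * (w j).1 l := by
    intro l
    have := congrArg (fun v => v.1 l) hg
    simpa [myfst_sum, mysum_apply, PiLp.smul_apply] using this
  have hzero : ∀ l, l ≠ i → ∀ j, lam j * (w j).1 l = 0 := by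
    intro l hl j
    have h0 : ∑ j, lam j * (w j).1 l = 0 := by
      rw [← hfst l]; simp [EuclideanSpace.single_apply, hl]
    exact (Finset.sum_eq_zero_iff_of_nonneg
      (fun j _ => mul_nonneg (hlam j) ((hmem j).1 l))).1 h0 j (Finset.mem_univ j)
  have hone : ∑ j, lam j * (w j).1 i = 1 := by
    rw [← hfst i]; simp [EuclideanSpace.single_apply]
  have claimA : ∀ j, lam j * (ε * (w j).2) ≤ lam j * (w j).1 i := by
    intro j
    rcases eq_or_lt_of_le (hlam j) with h0 | h0
    · rw [← h0]; simp
    · apply mul_le_mul_of_nonneg_left _ (le_of_lt h0)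
      have h1 : ε * (w j).2 ≤ |(w j).2| := by
        calc ε * (w j).2 ≤ |ε * (w j).2| := le_abs_self _
          _ = |ε| * |(w j).2| := abs_mul _ _
          _ = |(w j).2| := by rw [hεabs, one_mul]
      have h2 : ∑ l, (w j).1 l = (w j).1 i := by
        apply Finset.sum_eq_single_of_mem i (Finset.mem_univ i)
        intro l _ hl
        exact (mul_eq_zero.1 (hzero l hl j)).resolve_left (ne_of_gt h0)
      linarith [(hmem j).2]
  have hsum1 : ∑ j, lam j * (ε * (w j).2) = 1 := by
    have h : ∑ j, lam j * (ε * (w j).2) = ε * ∑ j, lam j * (w j).2 := by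
      rw [Finset.mul_sum]
      exact Finset.sum_congr rfl fun j _ => by ring
    rw [h, ← hsnd, hε2]
  have heq : ∀ j ∈ Finset.univ, lam j * (ε * (w j).2) = lam j * (w j).1 i :=
    (Finset.sum_eq_sum_iff_of_le (fun j _ => claimA j)).1 (by rw [hsum1, hone])
  have hex : ∃ j, lam j * (ε * (w j).2) ≠ 0 := by
    by_contra h
    push_neg at h
    have h0 : ∑ j, lam j * (ε * (w j).2) = 0 := Finset.sum_eq_zero fun j _ => h j
    rw [hsum1] at h0
    norm_num at h0
  obtain ⟨j, hj⟩ := hex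
  have hlj : lam j ≠ 0 := fun h => hj (by rw [h, zero_mul])
  have hc1 : ε * (w j).2 = (w j).1 i := mul_left_cancel₀ hlj (heq j (Finset.mem_univ j))
  set c := (w j).1 i with hcdef
  have hcne : c ≠ 0 := by
    intro h
    apply hj
    rw [hc1, h, mul_zero]
  have hcpos : 0 < c := lt_of_le_of_ne ((hmem j).1 i) (Ne.symm hcne)
  refine ⟨j, c, hcpos, ?_⟩
  apply Prod.ext
  · ext l
    simp only [Prod.smul_fst, PiLp.smul_apply, EuclideanSpace.single_apply, smul_eq_mul]
    rcases eq_or_ne l i with rfl | hl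
    · simp [hcdef]
    · rw [(mul_eq_zero.1 (hzero l hl j)).resolve_left hlj]
      simp [hl]
  · simp only [Prod.smul_snd, smul_eq_mul]
    calc (w j).2 = (w j).2 * (ε * ε) := by rw [hε2, mul_one]
      _ = (ε * (w j).2) * ε := by ring
      _ = c * ε := by rw [hc1]

theorem gen_mem_dual (p : ℕ) (i : Fin p) (ε : ℝ) (hε : ε = 1 ∨ ε = -1) :
    ((EuclideanSpace.single i 1, ε) : EuclideanSpace ℝ (Fin p) × ℝ) ∈
      dualSet1 p (extendedLorentzCone1 p) := by
  rw [dual_char]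
  constructor
  · intro l
    simp only [EuclideanSpace.single_apply]
    split <;> norm_num
  · have h : ∑ l, (EuclideanSpace.single i (1:ℝ)) l = 1 := by
      simp [EuclideanSpace.single_apply]
    rw [h]
    rcases hε with h' | h' <;> rw [h'] <;> norm_num

end Stmt5Aux

open Stmt5Aux in
/-- For `q = 1`, the dual `L*` of the extended Lorentz cone is generated by
the `2p` vectors `(e^i,1), (e^i,−1)`, `i = 1,…,p`, cannot be generated by
fewer than `2p` vectors, and is `(p+1)`-dimensional. -/
theorem stmt5 (p : ℕ) (hp : 0 < p) :
    dualSet1 p (extendedLorentzCone1 p) =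
      coneGen (Fin.append (fun i : Fin p => (EuclideanSpace.single i (1:ℝ), (1:ℝ)))
        (fun i : Fin p => (EuclideanSpace.single i (1:ℝ), (-1:ℝ)))) ∧
    (∀ k : ℕ, k < 2 * p → ∀ w : Fin k → EuclideanSpace ℝ (Fin p) × ℝ,
      dualSet1 p (extendedLorentzCone1 p) ≠ coneGen w) ∧
    Module.finrank ℝ (Submodule.span ℝ (dualSet1 p (extendedLorentzCone1 p))) = p + 1 := by
  refine ⟨?_, ?_, ?_⟩
  · ext z
    rw [dual_char, cone_char]
  · intro k hk w heq
    have hwD : ∀ j, w j ∈ dualSet1 p (extendedLorentzCone1 p) := by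
      intro j
      rw [heq]
      refine ⟨fun i => if i = j then 1 else 0, fun i => by by_cases h : i = j <;> simp [h], ?_⟩
      simp [ite_smul]
    have hmem : ∀ j, (∀ l, 0 ≤ (w j).1 l) ∧ |(w j).2| ≤ ∑ l, (w j).1 l :=
      fun j => (dual_char p (w j)).1 (hwD j)
    have key : ∀ x : Fin p × Bool, ∃ j, ∃ c : ℝ, 0 < c ∧
        w j = c • (EuclideanSpace.single x.1 1, (if x.2 then (1:ℝ) else -1)) := by
      intro x
      have hε : (if x.2 then (1:ℝ) else -1) = 1 ∨ (if x.2 then (1:ℝ) else -1) = -1 := by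
        cases x.2 <;> simp
      have hg := gen_mem_dual p x.1 _ hε
      rw [heq] at hg
      obtain ⟨lam, hlam, hsum⟩ := hg
      exact extreme_lemma w hmem x.1 _ hε lam hlam hsum
    choose F c hcpos hcw using key
    have hinj : Function.Injective F := by
      intro x y hxy
      have h : c x • ((EuclideanSpace.single x.1 1, (if x.2 then (1:ℝ) else -1)) :
          EuclideanSpace ℝ (Fin p) × ℝ) =
          c y • (EuclideanSpace.single y.1 1, (if y.2 then (1:ℝ) else -1)) :=
        (hcw x).symm.trans (by rw [hxy]; exact hcw y)
      have h1 := congrArg (fun v => v.1 x.1) h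
      simp only [Prod.smul_fst, PiLp.smul_apply, EuclideanSpace.single_apply,
        smul_eq_mul, eq_self_iff_true, if_true, mul_one] at h1
      have hxy1 : x.1 = y.1 := by
        by_contra hne
        rw [if_neg hne, mul_zero] at h1
        exact (ne_of_gt (hcpos x)) h1
      rw [if_pos hxy1, mul_one] at h1
      have h2 := congrArg Prod.snd h
      simp only [Prod.smul_snd, smul_eq_mul] at h2
      rw [h1] at h2
      have h2' := mul_left_cancel₀ (ne_of_gt (hcpos y)) h2
      have hxy2 : x.2 = y.2 := by
        cases hx2 : x.2 <;> cases hy2 : y.2 <;> rw [hx2, hy2] at h2' <;> revert h2' <;> norm_num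
      exact Prod.ext hxy1 hxy2
    have hcard : Fintype.card (Fin p × Bool) ≤ Fintype.card (Fin k) :=
      Fintype.card_le_of_injective F hinj
    simp only [Fintype.card_prod, Fintype.card_fin, Fintype.card_bool] at hcard
    omega
  · have hg1 : ∀ i : Fin p, ((EuclideanSpace.single i 1, (1:ℝ)) :
        EuclideanSpace ℝ (Fin p) × ℝ) ∈
        Submodule.span ℝ (dualSet1 p (extendedLorentzCone1 p)) :=
      fun i => Submodule.subset_span (gen_mem_dual p i 1 (Or.inl rfl))
    have hg2 : ∀ i : Fin p, ((EuclideanSpace.single i 1, (-1:ℝ)) :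
        EuclideanSpace ℝ (Fin p) × ℝ) ∈
        Submodule.span ℝ (dualSet1 p (extendedLorentzCone1 p)) :=
      fun i => Submodule.subset_span (gen_mem_dual p i (-1) (Or.inr rfl))
    set M := Submodule.span ℝ (dualSet1 p (extendedLorentzCone1 p)) with hM
    have h01 : ((0, (1:ℝ)) : EuclideanSpace ℝ (Fin p) × ℝ) ∈ M := by
      set i0 : Fin p := ⟨0, hp⟩
      have he : ((0, (1:ℝ)) : EuclideanSpace ℝ (Fin p) × ℝ) =
          (2⁻¹ : ℝ) • (((EuclideanSpace.single i0 1, (1:ℝ)) :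
            EuclideanSpace ℝ (Fin p) × ℝ) - (EuclideanSpace.single i0 1, (-1:ℝ))) := by
        apply Prod.ext
        · ext j; simp
        · norm_num
      rw [he]
      exact Submodule.smul_mem _ _ (Submodule.sub_mem _ (hg1 i0) (hg2 i0))
    have hsing : ∀ i : Fin p, ((EuclideanSpace.single i 1, (0:ℝ)) :
        EuclideanSpace ℝ (Fin p) × ℝ) ∈ M := by
      intro i
      have he : ((EuclideanSpace.single i 1, (0:ℝ)) : EuclideanSpace ℝ (Fin p) × ℝ) =
          (2⁻¹ : ℝ) • (((EuclideanSpace.single i 1, (1:ℝ)) :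
            EuclideanSpace ℝ (Fin p) × ℝ) + (EuclideanSpace.single i 1, (-1:ℝ))) := by
        apply Prod.ext
        · ext j
          simp only [Prod.smul_fst, Prod.fst_add, PiLp.smul_apply, PiLp.add_apply,
            EuclideanSpace.single_apply, smul_eq_mul]
          split <;> norm_num
        · norm_num
      rw [he]
      exact Submodule.smul_mem _ _ (Submodule.add_mem _ (hg1 i) (hg2 i))
    have htop : M = ⊤ := by
      rw [Submodule.eq_top_iff']
      intro z
      have hz : z = (∑ i, z.1 i • ((EuclideanSpace.single i 1, (0:ℝ)) :
          EuclideanSpace ℝ (Fin p) × ℝ)) + z.2 • ((0, (1:ℝ)) :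
          EuclideanSpace ℝ (Fin p) × ℝ) := by
        apply Prod.ext
        · ext j
          simp only [Prod.fst_add, myfst_sum, Prod.smul_fst, PiLp.add_apply, mysum_apply,
            PiLp.smul_apply, EuclideanSpace.single_apply, smul_eq_mul, smul_zero]
          simp [Finset.sum_ite_eq]
        · simp only [Prod.snd_add, mysnd_sum, Prod.smul_snd, smul_eq_mul, mul_zero, mul_one]
          simp
      rw [hz]
      exact Submodule.add_mem _
        (Submodule.sum_mem _ fun i _ => Submodule.smul_mem _ _ (hsing i))
        (Submodule.smul_mem _ _ h01)
    rw [htop, finrank_top, Module.finrank_prod, finrank_euclideanSpace_fin,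
      Module.finrank_self]
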